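/- Let U be a positive linear operator on B_b(S) with U1 = 1 that is the dual of a Markov operator P, let μ* be an invariant probability measure of P, and let α ∈ (0,1), k ∈ ℕ with 2(1−α)^k‖f‖_∞ < ε for a given bounded Borel f and ε > 0. If ν₁,…,ν_k, ν'₁,…,ν'_k are probability measures with limsup_{n→∞} |⟨f, Pⁿν_i⟩ − ⟨f, Pⁿν'_i⟩| ≤ ε for each i, and if μ, μ' are probability measures admitting decompositions Pᴺμ = ∑_{i=1}^k α(1−α)^{i−1} P^{m_i}ν_i + (1−α)^k ρ and Pᴺμ' = ∑_{i=1}^k α(1−α)^{i−1} P^{m_i}ν'_i + (1−α)^k ρ' for some N, m_i ∈ ℕ and probability measures ρ, ρ', then limsup_{n→∞} |⟨f, Pⁿμ⟩ − ⟨f, Pⁿμ'⟩| ≤ ε(α + α(1−α) + ⋯ + α(1−α)^{k−1}) + 2(1−α)^k‖f‖_∞ < 2ε. -/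

import Mathlib

open MeasureTheory Filter Topology
open scoped ENNReal

/-- The concluding estimate of the main theorem: given the coupling-type decompositions of
`Pᴺμ` and `Pᴺμ'`, the asymptotic difference of `⟨f, Pⁿμ⟩` and `⟨f, Pⁿμ'⟩` is bounded by
`ε(α + α(1-α) + ⋯ + α(1-α)^{k-1}) + 2(1-α)^k‖f‖_∞ < 2ε`. -/
theorem stmt15 {S : Type*} [MetricSpace S] [PolishSpace S] [MeasurableSpace S] [BorelSpace S]
    (P : Measure S → Measure S)
    (hadd : ∀ μ ν : Measure S, P (μ + ν) = P μ + P ν)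
    (hsmul : ∀ (c : ℝ≥0∞) (μ : Measure S), P (c • μ) = c • P μ)
    (hmass : ∀ μ : Measure S, P μ Set.univ = μ Set.univ)
    (U : (S → ℝ) → (S → ℝ))
    (hU : ∀ (g : S → ℝ) (C : ℝ), Measurable g → (∀ x, |g x| ≤ C) →
      Measurable (U g) ∧ ∀ x, |U g x| ≤ C)
    (hUpos : ∀ g : S → ℝ, Measurable g → (∃ C, ∀ x, |g x| ≤ C) → (∀ x, 0 ≤ g x) →
      ∀ x, 0 ≤ U g x)
    (hU1 : U (fun _ => 1) = fun _ => 1)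
    (hdual : ∀ g : S → ℝ, Measurable g → (∃ C, ∀ x, |g x| ≤ C) →
      ∀ μ : Measure S, ∫ x, g x ∂ (P μ) = ∫ x, U g x ∂ μ)
    (μstar : Measure S) [IsProbabilityMeasure μstar] (hinv : P μstar = μstar)
    (f : S → ℝ) (hfm : Measurable f) (C : ℝ) (hfC : ∀ x, |f x| ≤ C)
    (α ε : ℝ) (hα0 : 0 < α) (hα1 : α < 1) (hε : 0 < ε)
    (k : ℕ) (hkε : 2 * (1 - α) ^ k * C < ε)
    (ν ν' : Fin k → Measure S)
    (hν : ∀ i, IsProbabilityMeasure (ν i)) (hν' : ∀ i, IsProbabilityMeasure (ν' i))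
    (hlim : ∀ i : Fin k,
      Filter.limsup (fun n : ℕ => |∫ x, f x ∂ (P^[n] (ν i)) - ∫ x, f x ∂ (P^[n] (ν' i))|)
        atTop ≤ ε)
    (μ μ' : Measure S) (hμ : IsProbabilityMeasure μ) (hμ' : IsProbabilityMeasure μ')
    (N : ℕ) (m : Fin k → ℕ) (ρ ρ' : Measure S)
    (hρ : IsProbabilityMeasure ρ) (hρ' : IsProbabilityMeasure ρ')
    (hdec : P^[N] μ =
      (∑ i : Fin k, ENNReal.ofReal (α * (1 - α) ^ (i : ℕ)) • P^[m i] (ν i))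
        + ENNReal.ofReal ((1 - α) ^ k) • ρ)
    (hdec' : P^[N] μ' =
      (∑ i : Fin k, ENNReal.ofReal (α * (1 - α) ^ (i : ℕ)) • P^[m i] (ν' i))
        + ENNReal.ofReal ((1 - α) ^ k) • ρ') :
    Filter.limsup (fun n : ℕ => |∫ x, f x ∂ (P^[n] μ) - ∫ x, f x ∂ (P^[n] μ')|) atTop
        ≤ ε * (∑ i ∈ Finset.range k, α * (1 - α) ^ i) + 2 * (1 - α) ^ k * C ∧
      ε * (∑ i ∈ Finset.range k, α * (1 - α) ^ i) + 2 * (1 - α) ^ k * C < 2 * ε := by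

  classical
  -- basic constants
  have hr0 : (0:ℝ) ≤ 1 - α := by linarith
  have hSne : Nonempty S := by
    by_contra h
    rw [not_nonempty_iff] at h
    have h1 := hμ.measure_univ
    rw [Set.univ_eq_empty_iff.mpr h, measure_empty] at h1
    exact zero_ne_one h1
  have hC0 : 0 ≤ C := le_trans (abs_nonneg _) (hfC hSne.some)
  -- linearity of iterates of P
  have hP0 : P 0 = 0 := by simpa using hsmul 0 0
  have hP0it : ∀ j : ℕ, P^[j] (0 : Measure S) = 0 := by
    intro j
    induction j with
    | zero => simp
    | succ j ih => rw [Function.iterate_succ_apply', ih, hP0]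
  have hPadd : ∀ (j : ℕ) (σ τ : Measure S), P^[j] (σ + τ) = P^[j] σ + P^[j] τ := by
    intro j
    induction j with
    | zero => intro σ τ; simp
    | succ j ih =>
      intro σ τ
      rw [Function.iterate_succ_apply', ih, hadd, Function.iterate_succ_apply',
        Function.iterate_succ_apply']
  have hPsmul : ∀ (j : ℕ) (c : ℝ≥0∞) (σ : Measure S), P^[j] (c • σ) = c • P^[j] σ := by
    intro j
    induction j with
    | zero => intro c σ; simp
    | succ j ih =>
      intro c σ
      rw [Function.iterate_succ_apply', ih, hsmul, Function.iterate_succ_apply']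
  have hPsum : ∀ (j : ℕ) (σ : Fin k → Measure S),
      P^[j] (∑ i : Fin k, σ i) = ∑ i : Fin k, P^[j] (σ i) := by
    intro j σ
    induction (Finset.univ : Finset (Fin k)) using Finset.induction_on with
    | empty => simpa using hP0it j
    | insert a s hnot ih =>
      rw [Finset.sum_insert hnot, Finset.sum_insert hnot, hPadd, ih]
  -- mass preservation
  have hmass_it : ∀ (j : ℕ) (σ : Measure S), P^[j] σ Set.univ = σ Set.univ := by
    intro j
    induction j with
    | zero => intro σ; simp
    | succ j ih => intro σ; rw [Function.iterate_succ_apply', hmass, ih]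
  have hprob : ∀ (j : ℕ) (σ : Measure S), IsProbabilityMeasure σ →
      IsProbabilityMeasure (P^[j] σ) := by
    intro j σ hσ
    exact ⟨by rw [hmass_it]; exact hσ.measure_univ⟩
  -- integrability and integral bounds
  have hint : ∀ (σ : Measure S), IsProbabilityMeasure σ → Integrable f σ := by
    intro σ hσ
    haveI := hσ
    exact (integrable_const C).mono' hfm.aestronglyMeasurable
      (Filter.Eventually.of_forall fun x => by simpa [Real.norm_eq_abs] using hfC x)
  have hIbd : ∀ (σ : Measure S), IsProbabilityMeasure σ → |∫ x, f x ∂σ| ≤ C := by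
    intro σ hσ
    haveI := hσ
    have h := norm_integral_le_of_norm_le_const (μ := σ) (f := f) (C := C)
      (Filter.Eventually.of_forall fun x => by rw [Real.norm_eq_abs]; exact hfC x)
    rwa [probReal_univ, mul_one, Real.norm_eq_abs] at h
  -- key integral formula
  have key : ∀ (σ : Measure S) (τ : Fin k → Measure S) (π : Measure S),
      (∀ i, IsProbabilityMeasure (τ i)) → IsProbabilityMeasure π →
      (P^[N] σ = (∑ i : Fin k, ENNReal.ofReal (α * (1 - α) ^ (i : ℕ)) • P^[m i] (τ i))
        + ENNReal.ofReal ((1 - α) ^ k) • π) →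
      ∀ n, N ≤ n →
      ∫ x, f x ∂ (P^[n] σ) =
        (∑ i : Fin k, (α * (1 - α) ^ (i : ℕ)) * ∫ x, f x ∂ (P^[(n - N) + m i] (τ i)))
          + (1 - α) ^ k * ∫ x, f x ∂ (P^[n - N] π) := by
    intro σ τ π hτ hπ hdecomp n hn
    have h1 : P^[n] σ = P^[n - N] (P^[N] σ) := by
      rw [← Function.iterate_add_apply, Nat.sub_add_cancel hn]
    have h2 : P^[n] σ =
        (∑ i : Fin k, ENNReal.ofReal (α * (1 - α) ^ (i : ℕ)) • P^[(n - N) + m i] (τ i))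
          + ENNReal.ofReal ((1 - α) ^ k) • P^[n - N] π := by
      rw [h1, hdecomp, hPadd, hPsum, hPsmul]
      congr 1
      refine Finset.sum_congr rfl fun i _ => ?_
      rw [hPsmul, Function.iterate_add_apply]
    rw [h2]
    have hintA : ∀ i ∈ (Finset.univ : Finset (Fin k)),
        Integrable f (ENNReal.ofReal (α * (1 - α) ^ (i : ℕ)) • P^[(n - N) + m i] (τ i)) :=
      fun i _ => (hint _ (hprob _ _ (hτ i))).smul_measure ENNReal.ofReal_ne_top
    have hintB : Integrable f (ENNReal.ofReal ((1 - α) ^ k) • P^[n - N] π) :=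
      (hint _ (hprob _ _ hπ)).smul_measure ENNReal.ofReal_ne_top
    rw [integral_add_measure (integrable_finset_sum_measure.2 hintA) hintB,
      integral_finset_sum_measure hintA]
    simp only [integral_smul_measure, smul_eq_mul]
    rw [ENNReal.toReal_ofReal (pow_nonneg hr0 k)]
    congr 1
    refine Finset.sum_congr rfl fun i _ => ?_
    rw [ENNReal.toReal_ofReal (mul_nonneg hα0.le (pow_nonneg hr0 _))]
  -- the pointwise bound for n ≥ N
  have hgbd : ∀ (i : Fin k) (n : ℕ),
      |∫ x, f x ∂ (P^[n] (ν i)) - ∫ x, f x ∂ (P^[n] (ν' i))| ≤ 2 * C := by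
    intro i n
    calc |∫ x, f x ∂ (P^[n] (ν i)) - ∫ x, f x ∂ (P^[n] (ν' i))|
        ≤ |∫ x, f x ∂ (P^[n] (ν i))| + |∫ x, f x ∂ (P^[n] (ν' i))| := abs_sub _ _
      _ ≤ C + C := add_le_add (hIbd _ (hprob _ _ (hν i))) (hIbd _ (hprob _ _ (hν' i)))
      _ = 2 * C := by ring
  have hpt : ∀ n, N ≤ n →
      |∫ x, f x ∂ (P^[n] μ) - ∫ x, f x ∂ (P^[n] μ')| ≤
        (∑ i : Fin k, (α * (1 - α) ^ (i : ℕ)) *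
          |∫ x, f x ∂ (P^[(n - N) + m i] (ν i)) - ∫ x, f x ∂ (P^[(n - N) + m i] (ν' i))|)
          + 2 * (1 - α) ^ k * C := by
    intro n hn
    rw [key μ ν ρ hν hρ hdec n hn, key μ' ν' ρ' hν' hρ' hdec' n hn]
    have heq : (∑ i : Fin k, (α * (1 - α) ^ (i : ℕ)) * ∫ x, f x ∂ (P^[(n - N) + m i] (ν i)))
          + (1 - α) ^ k * ∫ x, f x ∂ (P^[n - N] ρ)
        - ((∑ i : Fin k, (α * (1 - α) ^ (i : ℕ)) * ∫ x, f x ∂ (P^[(n - N) + m i] (ν' i)))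
          + (1 - α) ^ k * ∫ x, f x ∂ (P^[n - N] ρ'))
        = (∑ i : Fin k, (α * (1 - α) ^ (i : ℕ)) *
            (∫ x, f x ∂ (P^[(n - N) + m i] (ν i)) - ∫ x, f x ∂ (P^[(n - N) + m i] (ν' i))))
          + (1 - α) ^ k * (∫ x, f x ∂ (P^[n - N] ρ) - ∫ x, f x ∂ (P^[n - N] ρ')) := by
      simp only [mul_sub]
      rw [Finset.sum_sub_distrib]
      ring
    rw [heq]
    calc |(∑ i : Fin k, (α * (1 - α) ^ (i : ℕ)) *
            (∫ x, f x ∂ (P^[(n - N) + m i] (ν i)) - ∫ x, f x ∂ (P^[(n - N) + m i] (ν' i))))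
          + (1 - α) ^ k * (∫ x, f x ∂ (P^[n - N] ρ) - ∫ x, f x ∂ (P^[n - N] ρ'))|
        ≤ |∑ i : Fin k, (α * (1 - α) ^ (i : ℕ)) *
            (∫ x, f x ∂ (P^[(n - N) + m i] (ν i)) - ∫ x, f x ∂ (P^[(n - N) + m i] (ν' i)))|
          + |(1 - α) ^ k * (∫ x, f x ∂ (P^[n - N] ρ) - ∫ x, f x ∂ (P^[n - N] ρ'))| :=
        abs_add_le _ _
      _ ≤ (∑ i : Fin k, (α * (1 - α) ^ (i : ℕ)) *
            |∫ x, f x ∂ (P^[(n - N) + m i] (ν i)) - ∫ x, f x ∂ (P^[(n - N) + m i] (ν' i))|)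
          + 2 * (1 - α) ^ k * C := by
        gcongr
        · calc |∑ i : Fin k, (α * (1 - α) ^ (i : ℕ)) *
                (∫ x, f x ∂ (P^[(n - N) + m i] (ν i)) - ∫ x, f x ∂ (P^[(n - N) + m i] (ν' i)))|
              ≤ ∑ i : Fin k, |(α * (1 - α) ^ (i : ℕ)) *
                (∫ x, f x ∂ (P^[(n - N) + m i] (ν i)) - ∫ x, f x ∂ (P^[(n - N) + m i] (ν' i)))| :=
              Finset.abs_sum_le_sum_abs _ _
            _ ≤ _ := by
              refine Finset.sum_le_sum fun i _ => ?_
              rw [abs_mul, abs_of_nonneg (mul_nonneg hα0.le (pow_nonneg hr0 _))]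
        · rw [abs_mul, abs_of_nonneg (pow_nonneg hr0 k)]
          calc (1 - α) ^ k * |∫ x, f x ∂ (P^[n - N] ρ) - ∫ x, f x ∂ (P^[n - N] ρ')|
              ≤ (1 - α) ^ k * (2 * C) := by
                refine mul_le_mul_of_nonneg_left ?_ (pow_nonneg hr0 k)
                calc |∫ x, f x ∂ (P^[n - N] ρ) - ∫ x, f x ∂ (P^[n - N] ρ')|
                    ≤ |∫ x, f x ∂ (P^[n - N] ρ)| + |∫ x, f x ∂ (P^[n - N] ρ')| := abs_sub _ _
                  _ ≤ C + C := add_le_add (hIbd _ (hprob _ _ hρ)) (hIbd _ (hprob _ _ hρ'))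
                  _ = 2 * C := by ring
            _ = 2 * (1 - α) ^ k * C := by ring
  -- geometric sum identity
  have hgeom : ∀ K : ℕ, (∑ i ∈ Finset.range K, α * (1 - α) ^ i) = 1 - (1 - α) ^ K := by
    intro K
    induction K with
    | zero => simp
    | succ K ih => rw [Finset.sum_range_succ, ih, pow_succ]; ring
  have hSk0 : 0 ≤ ∑ i ∈ Finset.range k, α * (1 - α) ^ i :=
    Finset.sum_nonneg fun i _ => mul_nonneg hα0.le (pow_nonneg hr0 _)
  have hSk1 : (∑ i ∈ Finset.range k, α * (1 - α) ^ i) ≤ 1 := by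
    rw [hgeom]; have := pow_nonneg hr0 k; linarith
  constructor
  · -- the limsup bound
    refine le_of_forall_pos_le_add fun δ hδ => ?_
    have hbd : ∀ i : Fin k, Filter.IsBoundedUnder (· ≤ ·) atTop
        (fun n : ℕ => |∫ x, f x ∂ (P^[n] (ν i)) - ∫ x, f x ∂ (P^[n] (ν' i))|) :=
      fun i => isBoundedUnder_of ⟨2 * C, fun n => hgbd i n⟩
    have hev : ∀ i : Fin k, ∀ᶠ n : ℕ in atTop,
        |∫ x, f x ∂ (P^[n] (ν i)) - ∫ x, f x ∂ (P^[n] (ν' i))| < ε + δ := by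
      intro i
      exact eventually_lt_of_limsup_lt (lt_of_le_of_lt (hlim i) (by linarith)) (hbd i)
    have hshift : ∀ i : Fin k, Filter.Tendsto (fun n : ℕ => (n - N) + m i) atTop atTop :=
      fun i => (tendsto_add_atTop_nat (m i)).comp (tendsto_sub_atTop_nat N)
    have hev' : ∀ i : Fin k, ∀ᶠ n : ℕ in atTop,
        |∫ x, f x ∂ (P^[(n - N) + m i] (ν i)) - ∫ x, f x ∂ (P^[(n - N) + m i] (ν' i))|
          < ε + δ := fun i => (hshift i).eventually (hev i)
    have hall : ∀ᶠ n : ℕ in atTop, ∀ i : Fin k,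
        |∫ x, f x ∂ (P^[(n - N) + m i] (ν i)) - ∫ x, f x ∂ (P^[(n - N) + m i] (ν' i))|
          < ε + δ := eventually_all.mpr hev'
    have hNev : ∀ᶠ n : ℕ in atTop, N ≤ n := eventually_ge_atTop N
    refine limsup_le_of_le ?_ ?_
    · exact isCoboundedUnder_le_of_le atTop (x := 0) fun n => abs_nonneg _
    · filter_upwards [hall, hNev] with n h1 h2
      calc |∫ x, f x ∂ (P^[n] μ) - ∫ x, f x ∂ (P^[n] μ')|
          ≤ (∑ i : Fin k, (α * (1 - α) ^ (i : ℕ)) *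
              |∫ x, f x ∂ (P^[(n - N) + m i] (ν i)) - ∫ x, f x ∂ (P^[(n - N) + m i] (ν' i))|)
            + 2 * (1 - α) ^ k * C := hpt n h2
        _ ≤ (∑ i : Fin k, (α * (1 - α) ^ (i : ℕ)) * (ε + δ)) + 2 * (1 - α) ^ k * C := by
            refine add_le_add_left (Finset.sum_le_sum fun i _ => ?_) _
            exact mul_le_mul_of_nonneg_left (h1 i).le
              (mul_nonneg hα0.le (pow_nonneg hr0 _))
        _ = (ε + δ) * (∑ i ∈ Finset.range k, α * (1 - α) ^ i) + 2 * (1 - α) ^ k * C := by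
            rw [← Finset.sum_mul, Finset.sum_range fun i => α * (1 - α) ^ i]
            ring
        _ ≤ ε * (∑ i ∈ Finset.range k, α * (1 - α) ^ i) + 2 * (1 - α) ^ k * C + δ := by
            nlinarith [mul_le_of_le_one_right hδ.le hSk1]
  · -- the strict inequality
    have h1 : ε * (∑ i ∈ Finset.range k, α * (1 - α) ^ i) ≤ ε :=
      mul_le_of_le_one_right hε.le hSk1
    linarith
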